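/- For every natural number k ≥ 2, there exists a balanced weighing scheme for (3 ^ k - 3) / 2 coins using k weighings that identifies the counterfeit. -/

import Mathlib

/-- A weighing scheme: every entry lies in {-1, 0, 1}. -/
def IsScheme {k n : ℕ} (M : Fin k → Fin n → ℤ) : Prop :=
  ∀ j i, M j i ∈ ({-1, 0, 1} : Set ℤ)

/-- A scheme is balanced: each weighing puts equally many coins on each pan. -/
def IsBalanced {k n : ℕ} (M : Fin k → Fin n → ℤ) : Prop :=
  ∀ j, (Finset.univ.filter (fun i => M j i = 1)).card =
       (Finset.univ.filter (fun i => M j i = -1)).card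

/-- A counterfeit scenario: genuine weight `g`, counterfeit coin `c`, weights `w`. -/
def IsScenario {n : ℕ} (g : ℝ) (c : Fin n) (w : Fin n → ℝ) : Prop :=
  (∀ i, i ≠ c → w i = g) ∧ w c ≠ g

/-- The scheme identifies the counterfeit coin and its weight deviation. -/
def Identifies {k n : ℕ} (M : Fin k → Fin n → ℤ) : Prop :=
  ∀ (g : ℝ) (c : Fin n) (w : Fin n → ℝ) (g' : ℝ) (c' : Fin n) (w' : Fin n → ℝ),
    IsScenario g c w → IsScenario g' c' w' →
    (∀ j, Real.sign (∑ i, (M j i : ℝ) * w i) = Real.sign (∑ i, (M j i : ℝ) * w' i)) →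
    c = c' ∧ Real.sign (w c - g) = Real.sign (w' c' - g')

namespace CoinAux

def lead : ∀ {m : ℕ}, (Fin m → ZMod 3) → ZMod 3
  | 0, _ => 0
  | _+1, d => if d 0 = 0 then lead (fun i => d i.succ) else d 0

lemma lead_eq_zero : ∀ {m : ℕ} (d : Fin m → ZMod 3), lead d = 0 ↔ d = 0
  | 0, d => by
    constructor
    · intro _; funext i; exact i.elim0
    · intro _; rfl
  | m+1, d => by
    unfold lead
    by_cases h : d 0 = 0
    · simp only [h, if_true, lead_eq_zero]
      constructor
      · intro ht
        funext j
        refine Fin.cases h (fun j' => ?_) j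
        exact congrFun ht j'
      · intro hz; funext j; exact congrFun hz j.succ
    · simp only [h, if_false]
      constructor
      · intro h0; exact h0.elim
      · intro hz; exact absurd (congrFun hz 0) h

lemma lead_neg : ∀ {m : ℕ} (d : Fin m → ZMod 3), lead (-d) = -lead d
  | 0, d => by simp [lead]
  | m+1, d => by
    unfold lead
    by_cases h : d 0 = 0
    · have h' : (-d) 0 = 0 := by simp [h]
      simp only [h, h', if_true]
      have : (fun i : Fin m => (-d) i.succ) = -(fun i => d i.succ) := by funext i; rfl
      rw [this, lead_neg]
    · have h' : (-d) 0 ≠ 0 := by simpa using h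
      simp only [h, h', if_false]
      rfl

def mu : ZMod 3 → ℤ := fun x => if x = 0 then 0 else if x = 1 then 1 else -1

lemma mu_mem (x : ZMod 3) : mu x ∈ ({-1, 0, 1} : Set ℤ) := by
  revert x; decide
lemma mu_inj {x y : ZMod 3} : mu x = mu y → x = y := by revert x y; decide
lemma mu_neg (x : ZMod 3) : mu (-x) = -mu x := by revert x; decide
lemma mu_eq_one {x : ZMod 3} : mu x = 1 ↔ x = 1 := by revert x; decide
lemma mu_eq_negone {x : ZMod 3} : mu x = -1 ↔ x = 2 := by revert x; decide
lemma mu_cycle (x : ZMod 3) : mu x + mu (x+1) + mu (x+2) = 0 := by revert x; decide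
lemma mu_ne_zero {x : ZMod 3} : x ≠ 0 → mu x ≠ 0 := by revert x; decide

lemma card_lead (m : ℕ) :
    2 * (Finset.univ.filter (fun d : Fin (m+1) → ZMod 3 => lead d = 1)).card + 1
      = 3 ^ (m+1) := by
  have hbij : (Finset.univ.filter (fun d : Fin (m+1) → ZMod 3 => lead d = 1)).card
      = (Finset.univ.filter (fun d : Fin (m+1) → ZMod 3 => lead d = 2)).card := by
    refine Finset.card_nbij' (fun d => -d) (fun d => -d) ?_ ?_ ?_ ?_
    · intro d hd
      simp only [Finset.mem_coe, Finset.mem_filter, Finset.mem_univ, true_and] at hd ⊢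
      rw [lead_neg, hd]; decide
    · intro d hd
      simp only [Finset.mem_coe, Finset.mem_filter, Finset.mem_univ, true_and] at hd ⊢
      rw [lead_neg, hd]; decide
    · intro d _; simp
    · intro d _; simp
  have hzero : (Finset.univ.filter (fun d : Fin (m+1) → ZMod 3 => lead d = 0)).card = 1 := by
    have : (Finset.univ.filter (fun d : Fin (m+1) → ZMod 3 => lead d = 0)) = {0} := by
      ext d
      simp [lead_eq_zero]
    rw [this, Finset.card_singleton]
  have hsum : (Finset.univ : Finset (Fin (m+1) → ZMod 3)).card
      = ∑ x ∈ (Finset.univ : Finset (ZMod 3)),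
          (Finset.univ.filter (fun d : Fin (m+1) → ZMod 3 => lead d = x)).card :=
    Finset.card_eq_sum_card_fiberwise (by simp)
  rw [show (Finset.univ : Finset (ZMod 3)) = {0, 1, 2} from by decide] at hsum
  rw [Finset.sum_insert (by decide), Finset.sum_insert (by decide),
    Finset.sum_singleton] at hsum
  have hcard : (Finset.univ : Finset (Fin (m+1) → ZMod 3)).card = 3 ^ (m+1) := by
    rw [Finset.card_univ, Fintype.card_fun]
    simp
  omega

abbrev A (m : ℕ) := {d : Fin (m+1) → ZMod 3 // lead d = 1}

lemma card_A (m : ℕ) : Fintype.card (ZMod 3 × A m) = (3 ^ (m+2) - 3) / 2 := by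
  have h1 : Fintype.card (A m)
      = (Finset.univ.filter (fun d : Fin (m+1) → ZMod 3 => lead d = 1)).card :=
    Fintype.card_subtype _
  have h2 := card_lead m
  have h3 : (3:ℕ) ^ (m+2) = 3 * 3 ^ (m+1) := by ring
  rw [Fintype.card_prod, ZMod.card, h1]
  omega

noncomputable def ee (m : ℕ) : Fin ((3 ^ (m+2) - 3) / 2) ≃ (ZMod 3 × A m) :=
  (Fintype.equivFinOfCardEq (card_A m)).symm

noncomputable def vec (m : ℕ) (i : Fin ((3 ^ (m+2) - 3) / 2)) : Fin (m+2) → ZMod 3 :=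
  fun j => (ee m i).1 + Fin.cases 0 (fun j' => (ee m i).2.1 j') j

noncomputable def M (m : ℕ) : Fin (m+2) → Fin ((3 ^ (m+2) - 3) / 2) → ℤ :=
  fun j i => mu (vec m i j)

lemma vec_inj {m : ℕ} {i i' : Fin ((3 ^ (m+2) - 3) / 2)}
    (h : ∀ j, vec m i j = vec m i' j) : i = i' := by
  have h0 := h 0
  simp only [vec, Fin.cases_zero, add_zero] at h0
  have hd : (ee m i).2.1 = (ee m i').2.1 := by
    funext j'
    have := h j'.succ
    simp only [vec, Fin.cases_succ, h0] at this
    exact add_left_cancel this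
  apply (ee m).injective
  exact Prod.ext h0 (Subtype.ext hd)

lemma vec_ne_neg {m : ℕ} {i i' : Fin ((3 ^ (m+2) - 3) / 2)}
    (h : ∀ j, vec m i j = -vec m i' j) : False := by
  have h0 := h 0
  simp only [vec, Fin.cases_zero, add_zero] at h0
  have hd : (ee m i).2.1 = -(ee m i').2.1 := by
    funext j'
    have := h j'.succ
    simp only [vec, Fin.cases_succ, h0] at this
    have : -(ee m i').1 + (ee m i).2.1 j' = -(ee m i').1 + -(ee m i').2.1 j' := by
      rw [this]; ring
    exact add_left_cancel this
  have h1 := (ee m i).2.2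
  have h2 := (ee m i').2.2
  rw [hd, lead_neg, h2] at h1
  exact absurd h1 (by decide)

lemma vec_ne_zero {m : ℕ} (i : Fin ((3 ^ (m+2) - 3) / 2)) : ∃ j, vec m i j ≠ 0 := by
  by_cases ha : (ee m i).1 = 0
  · have hd : (ee m i).2.1 ≠ 0 := by
      intro h0
      have := (ee m i).2.2
      rw [h0] at this
      rw [(lead_eq_zero (0 : Fin (m+1) → ZMod 3)).2 rfl] at this
      exact absurd this.symm (by decide)
    obtain ⟨j', hj'⟩ := Function.ne_iff.1 hd
    refine ⟨j'.succ, ?_⟩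
    simp only [vec, Fin.cases_succ, ha, zero_add]
    simpa using hj'
  · exact ⟨0, by simpa [vec] using ha⟩

noncomputable def tau (m : ℕ) : Fin ((3 ^ (m+2) - 3) / 2) ≃ Fin ((3 ^ (m+2) - 3) / 2) :=
  (ee m).trans ((Equiv.prodCongr (Equiv.addRight (1 : ZMod 3)) (Equiv.refl _)).trans (ee m).symm)

lemma ee_tau (m : ℕ) (i : Fin ((3 ^ (m+2) - 3) / 2)) :
    ee m (tau m i) = ((ee m i).1 + 1, (ee m i).2) := by
  simp [tau, Prod.map]

lemma vec_tau (m : ℕ) (i : Fin ((3 ^ (m+2) - 3) / 2)) (j : Fin (m+2)) :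
    vec m (tau m i) j = vec m i j + 1 := by
  simp only [vec, ee_tau]
  ring

end CoinAux

open CoinAux in
/-- For every k ≥ 2, there is a balanced weighing scheme for (3 ^ k - 3) / 2
coins using k weighings that identifies the counterfeit. -/
theorem exists_scheme (k : ℕ) (hk : 2 ≤ k) :
    ∃ M : Fin k → Fin ((3 ^ k - 3) / 2) → ℤ,
      IsScheme M ∧ IsBalanced M ∧ Identifies M := by
  obtain ⟨m, rfl⟩ : ∃ m, k = m + 2 := ⟨k - 2, by omega⟩
  refine ⟨M m, fun j i => mu_mem _, ?_, ?_⟩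
  · -- balanced
    intro j
    refine Finset.card_nbij' (tau m) ((tau m).symm) ?_ ?_ ?_ ?_
    · intro i hi
      simp only [Finset.mem_coe, Finset.mem_filter, Finset.mem_univ, true_and, M, mu_eq_one, mu_eq_negone] at hi ⊢
      rw [vec_tau, hi]; decide
    · intro i hi
      simp only [Finset.mem_coe, Finset.mem_filter, Finset.mem_univ, true_and, M, mu_eq_one, mu_eq_negone] at hi ⊢
      have := vec_tau m ((tau m).symm i) j
      rw [(tau m).apply_symm_apply] at this
      have h2 : vec m ((tau m).symm i) j = vec m i j - 1 := eq_sub_of_add_eq this.symm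
      rw [h2, hi]; decide
    · intro i _; exact (tau m).symm_apply_apply i
    · intro i _; exact (tau m).apply_symm_apply i
  · -- identifies
    intro g c w g' c' w' hs hs' hout
    -- row sums are zero
    have rowsum : ∀ j : Fin (m+2), ∑ i, M m j i = 0 := by
      intro j
      have h1 : ∑ i, M m j i = ∑ i, M m j (tau m i) := (Equiv.sum_comp (tau m) _).symm
      have h2 : ∑ i, M m j (tau m i) = ∑ i, mu (vec m i j + 1) := by
        apply Finset.sum_congr rfl
        intro i _
        rw [M, vec_tau]
      have h1' : ∑ i, M m j i = ∑ i, mu (vec m i j + 1) := h1.trans h2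
      have h3 : ∑ i, mu (vec m i j + 1) = ∑ i, mu (vec m i j + 2) := by
        rw [Equiv.sum_comp (tau m) (fun i => mu (vec m i j + 1)) |>.symm]
        apply Finset.sum_congr rfl
        intro i _
        rw [vec_tau]; ring_nf
      have key : (3:ℤ) * ∑ i, M m j i = 0 := by
        have : (3:ℤ) * ∑ i, M m j i
            = ∑ i, (mu (vec m i j) + mu (vec m i j + 1) + mu (vec m i j + 2)) := by
          rw [Finset.sum_add_distrib, Finset.sum_add_distrib, ← h1', ← h1'.trans h3]
          simp [M]; ring
        rw [this]
        simp [mu_cycle]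
      omega
    have hsum : ∀ (g : ℝ) (c : Fin ((3 ^ (m+2) - 3) / 2)) (w : Fin ((3 ^ (m+2) - 3) / 2) → ℝ),
        IsScenario g c w →
        ∀ j, ∑ i, (M m j i : ℝ) * w i = (M m j c : ℝ) * (w c - g) := by
      intro g c w hs j
      have : ∑ i, (M m j i : ℝ) * w i
          = ∑ i, ((M m j i : ℝ) * (w i - g) + (M m j i : ℝ) * g) := by
        apply Finset.sum_congr rfl; intro i _; ring
      rw [this, Finset.sum_add_distrib, ← Finset.sum_mul]
      have hz : ∑ i, (M m j i : ℝ) = 0 := by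
        rw [← Int.cast_sum, rowsum j, Int.cast_zero]
      rw [hz, zero_mul, add_zero]
      apply Finset.sum_eq_single_of_mem c (Finset.mem_univ c)
      intro i _ hi
      rw [hs.1 i hi]; ring
    have hδ0 : w c - g ≠ 0 := sub_ne_zero.2 hs.2
    have hδ'0 : w' c' - g' ≠ 0 := sub_ne_zero.2 hs'.2
    have sgn : ∀ (z : ZMod 3) (x : ℝ), Real.sign ((mu z : ℝ) * x) = (mu z : ℝ) * Real.sign x := by
      intro z x
      rcases mu_mem z with h1 | h1 | h1 <;> rw [h1] <;> push_cast <;>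
        simp [Real.sign_neg]
    have hsign : ∀ j, (M m j c : ℝ) * Real.sign (w c - g)
        = (M m j c' : ℝ) * Real.sign (w' c' - g') := by
      intro j
      have h := hout j
      rw [hsum g c w hs j, hsum g' c' w' hs' j] at h
      simp only [M] at h ⊢
      rw [sgn, sgn] at h
      exact h
    have signcases : ∀ (x : ℝ), x ≠ 0 → Real.sign x = 1 ∨ Real.sign x = -1 := by
      intro x hx
      rcases lt_trichotomy x 0 with h | h | h
      · right; exact Real.sign_of_neg h
      · exact absurd h hx
      · left; exact Real.sign_of_pos h
    have meq : ∀ s s' : ℝ, Real.sign (w c - g) = s → Real.sign (w' c' - g') = s' →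
        (s = s' → ∀ j, M m j c = M m j c') := by
      intro s s' hs1 hs2 hss j
      have := hsign j
      rw [hs1, hs2, ← hss] at this
      have hs0 : s ≠ 0 := by
        rcases signcases _ hδ0 with h | h <;> rw [hs1] at h <;> rw [h] <;> norm_num
      have : (M m j c : ℝ) = (M m j c' : ℝ) := mul_right_cancel₀ hs0 this
      exact_mod_cast this
    have mneg : ∀ s s' : ℝ, Real.sign (w c - g) = s → Real.sign (w' c' - g') = s' →
        (s = -s' → ∀ j, M m j c = -M m j c') := by
      intro s s' hs1 hs2 hss j
      have := hsign j
      rw [hs1, hs2, hss] at this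
      have hs'0 : s' ≠ 0 := by
        rcases signcases _ hδ'0 with h | h <;> rw [hs2] at h <;> rw [h] <;> norm_num
      have h2 : (-(M m j c : ℝ)) * s' = (M m j c' : ℝ) * s' := by
        rw [← this]; ring
      have : (-(M m j c) : ℝ) = (M m j c' : ℝ) := mul_right_cancel₀ hs'0 h2
      have : -(M m j c) = M m j c' := by exact_mod_cast this
      omega
    rcases signcases _ hδ0 with h1 | h1 <;> rcases signcases _ hδ'0 with h2 | h2
    · -- same sign
      have := meq 1 1 h1 h2 rfl
      have hcc : c = c' := vec_inj (fun j => mu_inj (by have h := this j; simpa [M] using h))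
      exact ⟨hcc, h1.trans h2.symm⟩
    · -- opposite
      exfalso
      have := mneg 1 (-1) h1 h2 (by norm_num)
      refine vec_ne_neg (i := c) (i' := c') (fun j => mu_inj ?_)
      have h := this j
      simp only [M] at h
      rw [mu_neg]; exact h
    · exfalso
      have := mneg (-1) 1 h1 h2 (by norm_num)
      refine vec_ne_neg (i := c) (i' := c') (fun j => mu_inj ?_)
      have h := this j
      simp only [M] at h
      rw [mu_neg]; exact h
    · have := meq (-1) (-1) h1 h2 rfl
      have hcc : c = c' := vec_inj (fun j => mu_inj (by have h := this j; simpa [M] using h))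
      exact ⟨hcc, h1.trans h2.symm⟩
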